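/- For the logistic loss ℓ(z) = ln(1 + e^{-z}), for every λ ≥ 1, the function ρ(λ) := min_{z ∈ ℝ} (λ ℓ(z) + z²) satisfies ρ(λ) ≤ 1 + ln²(λ). -/
import Mathlib


/-- For the logistic loss ℓ(z) = ln(1 + e^{-z}), for every λ ≥ 1,
ρ(λ) := min_z (λ ℓ(z) + z²) satisfies ρ(λ) ≤ 1 + ln²(λ). -/
theorem logistic_rho_bound (lam : ℝ) (hlam : 1 ≤ lam) :
    sInf (Set.range fun z : ℝ => lam * Real.log (1 + Real.exp (-z)) + z ^ 2)
      ≤ 1 + (Real.log lam) ^ 2 := by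
  have hlam0 : (0:ℝ) < lam := lt_of_lt_of_le one_pos hlam
  have hle : (fun z : ℝ => lam * Real.log (1 + Real.exp (-z)) + z ^ 2) (Real.log lam)
      ≤ 1 + (Real.log lam) ^ 2 := by
    simp only
    have hexp : Real.exp (-Real.log lam) = 1 / lam := by
      rw [Real.exp_neg, Real.exp_log hlam0, one_div]
    rw [hexp]
    have hlog : Real.log (1 + 1 / lam) ≤ 1 / lam := by
      have h := Real.log_le_sub_one_of_pos (by positivity : (0:ℝ) < 1 + 1 / lam)
      linarith
    have : lam * Real.log (1 + 1 / lam) ≤ 1 := by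
      calc lam * Real.log (1 + 1 / lam) ≤ lam * (1 / lam) :=
            mul_le_mul_of_nonneg_left hlog hlam0.le
        _ = 1 := by field_simp
    linarith
  refine le_trans (csInf_le ?_ ⟨Real.log lam, rfl⟩) hle
  refine ⟨0, ?_⟩
  rintro x ⟨z, rfl⟩
  have h1 : (0:ℝ) ≤ Real.log (1 + Real.exp (-z)) :=
    Real.log_nonneg (le_add_of_nonneg_right (Real.exp_pos _).le)
  have h2 : (0:ℝ) ≤ lam * Real.log (1 + Real.exp (-z)) :=
    mul_nonneg hlam0.le h1
  have h3 : (0:ℝ) ≤ z ^ 2 := sq_nonneg z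
  simpa using add_nonneg h2 h3
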